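/- Define c_n = π^{-(n+1)/2} Γ((n+1)/2) (1 + 2^{-s}) ζ(2s)/ζ(s) where n = 2s or n = 2s − 1 with s ≥ 2 an integer. Then c_n ≥ 8 for all n ≥ 21. (It suffices to show that (1+2^{-s}) > 1, that ζ(2s)/ζ(s) is increasing in s for s ≥ 2, that π^{-(n+1)/2} Γ((n+1)/2) is increasing for n ≥ 6, and that c_{21} > 8.) -/

import Mathlib

open Real

/-- The Riemann zeta function for real `s > 1`, as a series. -/
noncomputable def zeta (s : ℝ) : ℝ := ∑' m : ℕ, (m : ℝ) ^ (-s)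

lemma summable_zeta {t : ℝ} (ht : 1 < t) : Summable (fun m : ℕ => (m : ℝ) ^ (-t)) :=
  Real.summable_nat_rpow.mpr (by linarith)

lemma one_le_zeta {t : ℝ} (ht : 1 < t) : 1 ≤ zeta t := by
  have h := Summable.le_tsum (summable_zeta ht) 1
    (fun j _ => Real.rpow_nonneg (Nat.cast_nonneg j) _)
  simpa [zeta] using h

lemma zeta_two_eq : zeta 2 = π ^ 2 / 6 := by
  rw [zeta, ← hasSum_zeta_two.tsum_eq]
  refine tsum_congr fun m => ?_
  rw [Real.rpow_neg (Nat.cast_nonneg m), one_div, ← Real.rpow_natCast (m:ℝ) 2]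
  norm_num

lemma zeta_le {t : ℝ} (ht : 11 ≤ t) : zeta t ≤ 101/100 := by
  have hsum2 : Summable (fun m : ℕ => (m:ℝ) ^ (-(2:ℝ))) := summable_zeta (by norm_num)
  have hind : Summable (fun m : ℕ => if m = 1 then (1:ℝ) else 0) :=
    (hasSum_ite_eq 1 (1:ℝ)).summable
  have hsum2' : Summable (fun m : ℕ => (m:ℝ) ^ (-(2:ℝ)) * 2 ^ ((2:ℝ) - t)) :=
    hsum2.mul_right _
  have hb : ∀ m : ℕ, (m:ℝ) ^ (-t) ≤
      (if m = 1 then (1:ℝ) else 0) + (m:ℝ) ^ (-(2:ℝ)) * 2 ^ ((2:ℝ) - t) := by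
    intro m
    match m with
    | 0 =>
      have h1 : (-t) ≠ 0 := by intro hc; linarith [neg_eq_zero.mp hc]
      simp [Real.zero_rpow h1, Real.zero_rpow (by norm_num : -(2:ℝ) ≠ 0)]
    | 1 =>
      simp only [Nat.cast_one, Real.one_rpow]
      rw [if_pos trivial]
      have : (0:ℝ) ≤ 2 ^ ((2:ℝ) - t) := by positivity
      linarith
    | (k+2) =>
      have h2 : (2:ℝ) ≤ ((k+2 : ℕ):ℝ) := by push_cast; linarith
      have h0 : (0:ℝ) < ((k+2 : ℕ):ℝ) := by positivity
      have heq : ((k+2:ℕ):ℝ) ^ (-t) = ((k+2:ℕ):ℝ) ^ (-(2:ℝ)) * ((k+2:ℕ):ℝ) ^ ((2:ℝ) - t) := by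
        rw [← Real.rpow_add h0]; ring_nf
      rw [heq, if_neg (by omega)]
      have hle : ((k+2:ℕ):ℝ) ^ ((2:ℝ) - t) ≤ (2:ℝ) ^ ((2:ℝ) - t) :=
        Real.rpow_le_rpow_of_nonpos (by norm_num) h2 (by linarith)
      have hpos : (0:ℝ) ≤ ((k+2:ℕ):ℝ) ^ (-(2:ℝ)) := Real.rpow_nonneg h0.le _
      nlinarith [Real.rpow_nonneg h0.le ((2:ℝ) - t)]
  have key : zeta t ≤ 1 + zeta 2 * 2 ^ ((2:ℝ) - t) := by
    have := Summable.tsum_le_tsum hb (summable_zeta (by linarith)) (hind.add hsum2')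
    rwa [Summable.tsum_add hind hsum2', tsum_ite_eq, tsum_mul_right] at this
  have h2t : (2:ℝ) ^ ((2:ℝ) - t) ≤ 2 ^ (-(9:ℝ)) :=
    Real.rpow_le_rpow_of_exponent_le (by norm_num) (by linarith)
  have h9 : (2:ℝ) ^ (-(9:ℝ)) = 1/512 := by
    rw [show (-(9:ℝ)) = ((-9 : ℤ):ℝ) by norm_num, Real.rpow_intCast]
    norm_num
  have hz2 : zeta 2 ≤ 17/10 := by
    rw [zeta_two_eq]
    nlinarith [Real.pi_lt_d2, Real.pi_pos]
  have hz2' : (0:ℝ) ≤ zeta 2 := by rw [zeta_two_eq]; positivity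
  have h2tpos : (0:ℝ) ≤ 2 ^ ((2:ℝ) - t) := by positivity
  have hmul : zeta 2 * 2 ^ ((2:ℝ) - t) ≤ 17/10 * (1/512) := by
    rw [h9] at h2t
    exact mul_le_mul hz2 h2t h2tpos (by norm_num)
  linarith

lemma gamma_half (k : ℕ) :
    Real.Gamma ((k:ℝ) + 1/2) = ((2*k).factorial : ℝ) * √π / (4 ^ k * (k.factorial : ℝ)) := by
  induction k with
  | zero =>
    rw [show ((0:ℕ):ℝ) + 1/2 = 1/2 by norm_num, Real.Gamma_one_half_eq]
    norm_num [Nat.factorial]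
  | succ k ih =>
    have h0 : ((k:ℝ) + 1/2) ≠ 0 := by positivity
    have he : ((k+1:ℕ):ℝ) + 1/2 = ((k:ℝ) + 1/2) + 1 := by push_cast; ring
    rw [he, Real.Gamma_add_one h0, ih]
    have e1 : (2*(k+1)).factorial = (2*k+2) * ((2*k+1) * (2*k).factorial) := by
      rw [show 2*(k+1) = (2*k+1)+1 by ring, Nat.factorial_succ, Nat.factorial_succ]
    rw [e1, Nat.factorial_succ]
    have h4 : (0:ℝ) < 4 ^ k := by positivity
    have hf : (0:ℝ) < (k.factorial : ℝ) := by exact_mod_cast k.factorial_pos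
    field_simp
    push_cast
    ring

lemma fac_ge (k : ℕ) : (81:ℝ)/10 * π ^ (11+k) ≤ ((10+k).factorial : ℝ) := by
  induction k with
  | zero =>
    have hπ : π ^ 11 ≤ 3.15 ^ 11 := pow_le_pow_left₀ Real.pi_pos.le Real.pi_lt_d2.le 11
    norm_num [Nat.factorial] at hπ ⊢
    nlinarith
  | succ k ih =>
    have e1 : (81:ℝ)/10 * π ^ (11+(k+1)) = ((81:ℝ)/10 * π ^ (11+k)) * π := by
      rw [show 11+(k+1) = (11+k)+1 from rfl]; ring
    have e2 : ((10+(k+1)).factorial : ℝ) = ((10+k).factorial : ℝ) * (11+k) := by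
      rw [show 10+(k+1) = (10+k)+1 from rfl, Nat.factorial_succ]; push_cast; ring
    rw [e1, e2]
    have hπ : π ≤ (11:ℝ)+k := by nlinarith [Real.pi_lt_d2, (Nat.cast_nonneg k : (0:ℝ) ≤ k)]
    have hfp : (0:ℝ) ≤ (81:ℝ)/10 * π ^ (11+k) := by positivity
    calc (81:ℝ)/10 * π ^ (11+k) * π ≤ ((10+k).factorial : ℝ) * π := by
          exact mul_le_mul_of_nonneg_right ih Real.pi_pos.le
      _ ≤ ((10+k).factorial : ℝ) * (11+k) := by
          have : (0:ℝ) ≤ ((10+k).factorial : ℝ) := by positivity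
          nlinarith
      _ = ((10+k).factorial : ℝ) * ((11:ℝ)+k) := by push_cast; ring

lemma fac_ge2 (k : ℕ) :
    (81:ℝ)/10 * 4 ^ (11+k) * ((11+k).factorial : ℝ) * π ^ (11+k)
      ≤ ((2*(11+k)).factorial : ℝ) := by
  induction k with
  | zero =>
    have hπ : π ^ 11 ≤ 3.15 ^ 11 := pow_le_pow_left₀ Real.pi_pos.le Real.pi_lt_d2.le 11
    norm_num [Nat.factorial] at hπ ⊢
    nlinarith
  | succ k ih =>
    have e1 : (81:ℝ)/10 * 4 ^ (11+(k+1)) * ((11+(k+1)).factorial : ℝ) * π ^ (11+(k+1))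
        = ((81:ℝ)/10 * 4 ^ (11+k) * ((11+k).factorial : ℝ) * π ^ (11+k))
          * (4 * ((12:ℝ)+k) * π) := by
      rw [show 11+(k+1) = (11+k)+1 from rfl, pow_succ, pow_succ, Nat.factorial_succ]
      push_cast; ring
    have e2 : ((2*(11+(k+1))).factorial : ℝ)
        = ((2*(11+k)).factorial : ℝ) * ((2*(k:ℝ)+23) * (2*(k:ℝ)+24)) := by
      rw [show 2*(11+(k+1)) = (2*(11+k)+1)+1 by ring, Nat.factorial_succ, Nat.factorial_succ]
      push_cast; ring
    rw [e1, e2]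
    have hmul : 4 * ((12:ℝ)+k) * π ≤ (2*(k:ℝ)+23) * (2*(k:ℝ)+24) := by
      nlinarith [Real.pi_lt_d2, (Nat.cast_nonneg k : (0:ℝ) ≤ k)]
    have hLpos : (0:ℝ) ≤ (81:ℝ)/10 * 4 ^ (11+k) * ((11+k).factorial : ℝ) * π ^ (11+k) := by
      positivity
    have hFpos : (0:ℝ) ≤ ((2*(11+k)).factorial : ℝ) := by positivity
    calc (81:ℝ)/10 * 4 ^ (11+k) * ((11+k).factorial : ℝ) * π ^ (11+k) * (4 * ((12:ℝ)+k) * π)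
        ≤ ((2*(11+k)).factorial : ℝ) * (4 * ((12:ℝ)+k) * π) := by
          have hc : (0:ℝ) ≤ 4 * ((12:ℝ)+k) * π := by positivity
          exact mul_le_mul_of_nonneg_right ih hc
      _ ≤ ((2*(11+k)).factorial : ℝ) * ((2*(k:ℝ)+23) * (2*(k:ℝ)+24)) :=
          mul_le_mul_of_nonneg_left hmul hFpos

/-- With `c_n = π^{-(n+1)/2} Γ((n+1)/2) (1 + 2^{-s}) ζ(2s)/ζ(s)` for `n = 2s` or
`n = 2s - 1`, `s ≥ 2` an integer, we have `c_n ≥ 8` for all `n ≥ 21`. -/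
theorem stmt17 (n s : ℕ) (hn : 21 ≤ n) (hs : 2 ≤ s) (h : n = 2 * s ∨ n = 2 * s - 1) :
    8 ≤ Real.pi ^ (-(((n : ℝ) + 1) / 2)) * Real.Gamma (((n : ℝ) + 1) / 2) *
      (1 + 2 ^ (-(s : ℝ))) * (zeta (2 * s) / zeta s) := by
  have hs11 : 11 ≤ s := by omega
  -- zeta bounds
  have hs1 : (1:ℝ) < s := by exact_mod_cast lt_of_lt_of_le (by norm_num) hs11
  have hC : 1 ≤ zeta (2 * s) := one_le_zeta (by linarith)
  have hD2 : zeta s ≤ 101/100 := zeta_le (by exact_mod_cast hs11)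
  have hD1 : 1 ≤ zeta s := one_le_zeta hs1
  have hq : (100:ℝ)/101 ≤ zeta (2 * s) / zeta s := by
    rw [le_div_iff₀ (by linarith)]
    nlinarith
  have hB : (1:ℝ) ≤ 1 + 2 ^ (-(s:ℝ)) := by
    have : (0:ℝ) ≤ 2 ^ (-(s:ℝ)) := by positivity
    linarith
  -- the Gamma part
  have hA : (81:ℝ)/10 ≤ π ^ (-(((n : ℝ) + 1) / 2)) * Real.Gamma (((n : ℝ) + 1) / 2) := by
    rcases h with h | h
    · -- n = 2s, x = s + 1/2
      have hx : ((n : ℝ) + 1) / 2 = (s:ℝ) + 1/2 := by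
        rw [h]; push_cast; ring
      rw [hx, gamma_half s]
      have hps : π ^ ((s:ℝ) + 1/2) = π ^ s * √π := by
        rw [Real.rpow_add Real.pi_pos, Real.rpow_natCast, Real.sqrt_eq_rpow]
      rw [Real.rpow_neg Real.pi_pos.le, hps]
      have hsqrt : (0:ℝ) < √π := Real.sqrt_pos.mpr Real.pi_pos
      have hfac := fac_ge2 (s - 11)
      rw [show 11 + (s - 11) = s by omega] at hfac
      have h4 : (0:ℝ) < 4 ^ s := by positivity
      have hf : (0:ℝ) < (s.factorial : ℝ) := by exact_mod_cast s.factorial_pos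
      have hπp : (0:ℝ) < π ^ s := by positivity
      have key : (π ^ s * √π)⁻¹ * (((2*s).factorial : ℝ) * √π / (4 ^ s * (s.factorial : ℝ)))
          = ((2*s).factorial : ℝ) / (4 ^ s * (s.factorial : ℝ) * π ^ s) := by
        field_simp
      rw [key, le_div_iff₀ (by positivity)]
      nlinarith [hfac]
    · -- n = 2s - 1, x = s
      have hx : ((n : ℝ) + 1) / 2 = (s:ℝ) := by
        have : (n:ℝ) = 2 * (s:ℝ) - 1 := by
          rw [h, Nat.cast_sub (by omega : 1 ≤ 2*s)]; push_cast; ring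
        rw [this]; ring
      rw [hx]
      have hgam : Real.Gamma (s:ℝ) = ((s-1).factorial : ℝ) := by
        rw [show (s:ℝ) = ((s-1 : ℕ):ℝ) + 1 by
          rw [Nat.cast_sub (by omega)]; push_cast; ring]
        exact Real.Gamma_nat_eq_factorial (s-1)
      rw [hgam, Real.rpow_neg Real.pi_pos.le, Real.rpow_natCast]
      have hfac := fac_ge (s - 11)
      rw [show 11 + (s - 11) = s by omega, show 10 + (s - 11) = s - 1 by omega] at hfac
      have hπp : (0:ℝ) < π ^ s := by positivity
      rw [mul_comm, ← div_eq_mul_inv, le_div_iff₀ hπp]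
      linarith
  -- combine
  have hApos : (0:ℝ) ≤ π ^ (-(((n : ℝ) + 1) / 2)) * Real.Gamma (((n : ℝ) + 1) / 2) := by
    linarith
  calc (8:ℝ) ≤ (81/10) * 1 * (100/101) := by norm_num
    _ ≤ (π ^ (-(((n : ℝ) + 1) / 2)) * Real.Gamma (((n : ℝ) + 1) / 2)) * (1 + 2 ^ (-(s:ℝ)))
        * (zeta (2 * s) / zeta s) := by
        have h1 : (81:ℝ)/10 * 1 ≤ (π ^ (-(((n : ℝ) + 1) / 2)) * Real.Gamma (((n : ℝ) + 1) / 2))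
            * (1 + 2 ^ (-(s:ℝ))) :=
          mul_le_mul hA hB (by norm_num) hApos
        have h2 : (0:ℝ) ≤ (π ^ (-(((n : ℝ) + 1) / 2)) * Real.Gamma (((n : ℝ) + 1) / 2))
            * (1 + 2 ^ (-(s:ℝ))) := by nlinarith
        exact mul_le_mul h1 hq (by norm_num) h2
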